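/- Let τ be a locally finite positive Borel measure on ℝ supported in [0,∞). Then the following are equivalent: (a) the function M_lτ belongs to L²((0,∞), dk); (b) Σ_{n=0}^∞ τ([n,n+1])² < ∞; (c) ∫₀^∞ log[ 1 + (M_lτ(k)/k)² ] k² dk < ∞. -/

import Mathlib

open MeasureTheory Set
open scoped ENNReal

/-- The long-range Hardy–Littlewood maximal function
`(M_lτ)(x) = sup_{L ≥ 1} τ([x−L, x+L])/(2L)`. -/
noncomputable def maxLong (τ : Measure ℝ) (x : ℝ) : ℝ≥0∞ :=
  ⨆ (L : ℝ) (_ : 1 ≤ L), τ (Icc (x - L) (x + L)) / ENNReal.ofReal (2 * L)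

/-- The integrand `log[1 + (M_lτ(k)/k)²]·k²`, with value `∞` where `M_lτ(k) = ∞`. -/
noncomputable def logMaxLong (τ : Measure ℝ) (k : ℝ) : ℝ≥0∞ :=
  if maxLong τ k = ⊤ then ⊤
  else ENNReal.ofReal (Real.log (1 + ((maxLong τ k).toReal / k) ^ 2) * k ^ 2)

/-- The discrete (long-range) Hardy–Littlewood maximal function of a sequence. -/
noncomputable def Smax (b : ℕ → ℝ≥0∞) (m : ℕ) : ℝ≥0∞ :=
  ⨆ (W : ℕ) (_ : 1 ≤ W), (∑ n ∈ Finset.Icc (m - W) (m + W), b n) / (W : ℝ≥0∞)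

lemma sq_layer (x : ℝ≥0∞) :
    x ^ 2 = ∫⁻ t in Ioi (0:ℝ), (if ENNReal.ofReal t < x then ENNReal.ofReal (2*t) else 0) := by
  have hmeas : MeasurableSet {t : ℝ | ENNReal.ofReal t < x} :=
    measurableSet_lt (ENNReal.measurable_ofReal) measurable_const
  have hind : ∀ t : ℝ, (if ENNReal.ofReal t < x then ENNReal.ofReal (2*t) else 0)
      = Set.indicator {t : ℝ | ENNReal.ofReal t < x} (fun t => ENNReal.ofReal (2*t)) t := by
    intro t; rw [Set.indicator_apply]; rfl
  simp only [hind]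
  rw [lintegral_indicator hmeas, Measure.restrict_restrict hmeas]
  rcases eq_or_ne x ⊤ with rfl | hx
  · have h1 : {t : ℝ | ENNReal.ofReal t < ⊤} ∩ Ioi 0 = Ioi 0 := by
      ext t; simp [ENNReal.ofReal_lt_top]
    rw [h1, ENNReal.top_pow (by norm_num), eq_comm, ← top_le_iff]
    calc (⊤:ℝ≥0∞) = 2 * volume (Ioi (1:ℝ)) := by simp [Real.volume_Ioi]
      _ = ∫⁻ t in Ioi (1:ℝ), (2:ℝ≥0∞) := (setLIntegral_const _ _).symm
      _ ≤ ∫⁻ t in Ioi (1:ℝ), ENNReal.ofReal (2*t) := by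
          refine setLIntegral_mono (by fun_prop) (fun t ht => ?_)
          rw [show (2:ℝ≥0∞) = ENNReal.ofReal 2 by norm_num]
          exact ENNReal.ofReal_le_ofReal (by nlinarith [mem_Ioi.mp ht])
      _ ≤ ∫⁻ t in Ioi (0:ℝ), ENNReal.ofReal (2*t) :=
          lintegral_mono' (Measure.restrict_mono (Ioi_subset_Ioi zero_le_one) le_rfl) le_rfl
  · set X := x.toReal with hX
    have hX0 : 0 ≤ X := ENNReal.toReal_nonneg
    have h1 : {t : ℝ | ENNReal.ofReal t < x} ∩ Ioi 0 = Ioo 0 X := by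
      ext t
      simp only [mem_inter_iff, mem_setOf_eq, mem_Ioi, mem_Ioo]
      constructor
      · rintro ⟨h, ht⟩; exact ⟨ht, (ENNReal.ofReal_lt_iff_lt_toReal ht.le hx).mp h⟩
      · rintro ⟨ht, h⟩; exact ⟨(ENNReal.ofReal_lt_iff_lt_toReal ht.le hx).mpr h, ht⟩
    rw [h1]
    have hint : IntegrableOn (fun t : ℝ => 2*t) (Ioo 0 X) := by
      exact ((continuous_const.mul continuous_id).integrableOn_Icc).mono_set Ioo_subset_Icc_self
    rw [← ofReal_integral_eq_lintegral_ofReal hint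
      (ae_restrict_of_forall_mem measurableSet_Ioo (fun t ht => by
        have : (0:ℝ) < 2*t := by nlinarith [ht.1]
        simpa using this.le))]
    have h2 : ∫ t in Ioo (0:ℝ) X, 2*t = X^2 := by
      rw [← integral_Ioc_eq_integral_Ioo, ← intervalIntegral.integral_of_le hX0]
      rw [intervalIntegral.integral_const_mul, integral_id]
      ring
    rw [h2, ← ENNReal.ofReal_toReal hx, ← hX, ENNReal.ofReal_pow hX0]

lemma le_Smax (b : ℕ → ℝ≥0∞) (m W : ℕ) (hW : 1 ≤ W) :
    (∑ n ∈ Finset.Icc (m - W) (m + W), b n) / (W : ℝ≥0∞) ≤ Smax b m :=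
  le_iSup₂ (f := fun (W : ℕ) (_ : 1 ≤ W) => (∑ n ∈ Finset.Icc (m - W) (m + W), b n) / (W : ℝ≥0∞)) W hW

lemma ball_subset_Icc (m W : ℕ) {r : ℝ} (hr : (W:ℝ) ≥ r) :
    Metric.closedBall m r ⊆ ↑(Finset.Icc (m - W) (m + W)) := by
  intro x hx
  simp only [Metric.mem_closedBall, Nat.dist_eq] at hx
  have h1 : |(x:ℝ) - m| ≤ W := le_trans hx hr
  rw [abs_le] at h1
  simp only [Finset.coe_Icc, mem_Icc]
  constructor
  · have : (m:ℝ) ≤ x + W := by linarith [h1.1]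
    have : m ≤ x + W := by exact_mod_cast this
    omega
  · have : (x:ℝ) ≤ m + W := by linarith [h1.2]
    exact_mod_cast this

lemma Icc_subset_ball (m W : ℕ) :
    ↑(Finset.Icc (m - W) (m + W)) ⊆ Metric.closedBall (m:ℕ) (W:ℝ) := by
  intro x hx
  simp only [Finset.coe_Icc, mem_Icc] at hx
  simp only [Metric.mem_closedBall, Nat.dist_eq, abs_le]
  constructor
  · have : m ≤ x + W := by omega
    have := (Nat.cast_le (α := ℝ)).mpr this
    push_cast at this ⊢; linarith
  · have := (Nat.cast_le (α := ℝ)).mpr hx.2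
    push_cast at this ⊢; linarith

lemma weak_type (b : ℕ → ℝ≥0∞) (t : ℝ) (ht : 0 < t)
    (hB : (∑' n, (if ENNReal.ofReal (t/4) < b n then b n else 0)) ≠ ⊤) :
    Measure.count {m : ℕ | ENNReal.ofReal t < Smax b m}
      ≤ 9 * (∑' n, (if ENNReal.ofReal (t/4) < b n then b n else 0)) / ENNReal.ofReal (t/4) := by
  set c : ℝ≥0∞ := ENNReal.ofReal (t/4) with hc
  set big : ℕ → ℝ≥0∞ := fun n => if c < b n then b n else 0 with hbig
  set B : ℝ≥0∞ := ∑' n, big n with hBdef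
  have hc0 : c ≠ 0 := by
    simp only [hc, ne_eq, ENNReal.ofReal_eq_zero, not_le]; linarith
  have hcT : c ≠ ⊤ := ENNReal.ofReal_ne_top
  -- Step 1 : Smax b ≤ Smax big + 3c
  have step1 : ∀ m, Smax b m ≤ Smax big m + 3 * c := by
    intro m
    refine iSup₂_le fun W hW => ?_
    have hW0 : (W:ℝ≥0∞) ≠ 0 := by exact_mod_cast Nat.one_le_iff_ne_zero.mp hW
    have hWT : (W:ℝ≥0∞) ≠ ⊤ := ENNReal.natCast_ne_top W
    have hsplit : ∀ n, b n ≤ big n + c := by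
      intro n
      by_cases h : c < b n
      · simp [hbig, h]
      · simp only [hbig, h, if_false]; exact le_add_left (not_lt.mp h)
    calc (∑ n ∈ Finset.Icc (m - W) (m + W), b n) / (W : ℝ≥0∞)
        ≤ (∑ n ∈ Finset.Icc (m - W) (m + W), (big n + c)) / (W : ℝ≥0∞) := by
          gcongr with n hn; exact hsplit n
      _ = (∑ n ∈ Finset.Icc (m - W) (m + W), big n) / (W : ℝ≥0∞)
            + ((Finset.Icc (m - W) (m + W)).card * c) / (W : ℝ≥0∞) := by
          rw [Finset.sum_add_distrib, Finset.sum_const, nsmul_eq_mul, ENNReal.add_div]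
      _ ≤ Smax big m + 3 * c := by
          gcongr
          · exact le_iSup₂ (f := fun (W : ℕ) (_ : 1 ≤ W) =>
              (∑ n ∈ Finset.Icc (m - W) (m + W), big n) / (W : ℝ≥0∞)) W hW
          · rw [ENNReal.div_le_iff hW0 hWT]
            have hcard : ((Finset.Icc (m - W) (m + W)).card : ℝ≥0∞) ≤ 3 * W := by
              rw [Nat.card_Icc]
              have : (m + W + 1 - (m - W)) ≤ 3 * W := by omega
              exact_mod_cast this
            calc ((Finset.Icc (m - W) (m + W)).card : ℝ≥0∞) * c ≤ 3 * W * c := by gcongr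
              _ = 3 * c * W := by ring
      -- done
  -- Step 2 : inclusion of superlevel sets
  have step2 : {m : ℕ | ENNReal.ofReal t < Smax b m} ⊆ {m : ℕ | c < Smax big m} := by
    intro m hm
    simp only [mem_setOf_eq] at hm ⊢
    have h4 : ENNReal.ofReal t = c + 3 * c := by
      rw [hc, show t = 4 * (t/4) by ring, ENNReal.ofReal_mul (by norm_num)]
      rw [show ENNReal.ofReal (4:ℝ) = 4 by norm_num]
      ring
    have := lt_of_lt_of_le hm (step1 m)
    rw [h4] at this
    exact lt_of_add_lt_add_right (a := 3 * c) this
  -- Step 3 : witnesses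
  have h_ex : ∀ m ∈ {m : ℕ | c < Smax big m}, ∃ W : ℕ, 1 ≤ W ∧
      c * W < ∑ n ∈ Finset.Icc (m - W) (m + W), big n := by
    intro m hm
    simp only [mem_setOf_eq, Smax, lt_iSup_iff] at hm
    obtain ⟨W, hW, h⟩ := hm
    refine ⟨W, hW, ?_⟩
    have hW0 : (W:ℝ≥0∞) ≠ 0 := by exact_mod_cast Nat.one_le_iff_ne_zero.mp hW
    exact (ENNReal.lt_div_iff_mul_lt (Or.inl hW0) (Or.inl (ENNReal.natCast_ne_top W))).mp h
  classical
  set E' := {m : ℕ | c < Smax big m} with hE'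
  set Wf : ℕ → ℕ := fun m => if hm : m ∈ E' then (h_ex m hm).choose else 1 with hWf
  have hWf1 : ∀ m ∈ E', 1 ≤ Wf m := by
    intro m hm; rw [hWf]; simp only [hm, dif_pos]; exact (h_ex m hm).choose_spec.1
  have hWfsum : ∀ m ∈ E', c * (Wf m) < ∑ n ∈ Finset.Icc (m - Wf m) (m + Wf m), big n := by
    intro m hm; rw [hWf]; simp only [hm, dif_pos]; exact (h_ex m hm).choose_spec.2
  have hWfB : ∀ m ∈ E', ((Wf m : ℕ) : ℝ≥0∞) ≤ B / c := by
    intro m hm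
    have h1 : c * (Wf m) ≤ B := by
      refine le_trans (hWfsum m hm).le ?_
      exact ENNReal.sum_le_tsum _
    rw [ENNReal.le_div_iff_mul_le (Or.inl hc0) (Or.inl hcT), mul_comm]
    exact h1
  have hBcT : B / c ≠ ⊤ := by
    intro h
    rw [ENNReal.div_eq_top] at h
    rcases h with ⟨_, h⟩ | ⟨h, _⟩
    · exact hc0 h
    · exact hB h
  have hWfR : ∀ m ∈ E', ((Wf m : ℕ) : ℝ) ≤ (B / c).toReal := by
    intro m hm
    have := ENNReal.toReal_mono hBcT (hWfB m hm)
    simpa using this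
  -- Step 4 : Vitali covering
  obtain ⟨u, hu_sub, hu_disj, hu_cov⟩ :=
    Vitali.exists_disjoint_subfamily_covering_enlargement_closedBall E' (fun m => (m:ℕ))
      (fun m => (Wf m : ℝ)) ((B / c).toReal) hWfR 4 (by norm_num)
  -- Step 5 : covering bound
  have hcov : E' ⊆ ⋃ m ∈ u, Metric.closedBall (m:ℕ) (4 * (Wf m : ℝ)) := by
    intro a ha
    obtain ⟨m, hmu, hsub⟩ := hu_cov a ha
    exact mem_biUnion hmu (hsub (Metric.mem_closedBall_self (by positivity)))
  have hcount : Measure.count E' ≤ ∑' m : u, (9 * Wf (m:ℕ) : ℝ≥0∞) := by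
    refine le_trans (measure_mono hcov) (le_trans (measure_biUnion_le _ u.to_countable _) ?_)
    refine ENNReal.tsum_le_tsum fun m => ?_
    have hsub : Metric.closedBall ((m:ℕ):ℕ) (4 * (Wf (m:ℕ) : ℝ))
        ⊆ ↑(Finset.Icc ((m:ℕ) - 4 * Wf (m:ℕ)) ((m:ℕ) + 4 * Wf (m:ℕ))) := by
      refine ball_subset_Icc _ _ ?_
      push_cast; linarith
    refine le_trans (measure_mono hsub) ?_
    rw [Measure.count_apply_finset]
    have hcard : (Finset.Icc ((m:ℕ) - 4 * Wf (m:ℕ)) ((m:ℕ) + 4 * Wf (m:ℕ))).card ≤ 9 * Wf (m:ℕ) := by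
      rw [Nat.card_Icc]
      have := hWf1 _ (hu_sub m.2)
      omega
    calc ((Finset.Icc ((m:ℕ) - 4 * Wf (m:ℕ)) ((m:ℕ) + 4 * Wf (m:ℕ))).card : ℝ≥0∞)
        ≤ ((9 * Wf (m:ℕ) : ℕ) : ℝ≥0∞) := by exact_mod_cast hcard
      _ = (9 * Wf (m:ℕ) : ℝ≥0∞) := by push_cast; ring
  -- Step 6 : disjointness bound
  have hdisj_sum : ∑' m : u, (c * Wf (m:ℕ) : ℝ≥0∞) ≤ B := by
    have key : ∀ m : u, (c * Wf (m:ℕ) : ℝ≥0∞)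
        ≤ ∑' n, Set.indicator (↑(Finset.Icc ((m:ℕ) - Wf (m:ℕ)) ((m:ℕ) + Wf (m:ℕ))) : Set ℕ) big n := by
      intro m
      have h1 := (hWfsum (m:ℕ) (hu_sub m.2)).le
      refine le_trans h1 (le_of_eq ?_)
      rw [tsum_eq_sum (s := Finset.Icc ((m:ℕ) - Wf (m:ℕ)) ((m:ℕ) + Wf (m:ℕ)))
        (fun n hn => Set.indicator_of_notMem (by simpa using hn) _)]
      exact (Finset.sum_congr rfl fun n hn => (Set.indicator_of_mem (by simpa using hn) _).symm)
    refine le_trans (ENNReal.tsum_le_tsum key) ?_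
    rw [ENNReal.tsum_comm]
    refine le_trans (ENNReal.tsum_le_tsum fun n => ?_) le_rfl
    by_cases hex : ∃ m : u, n ∈ Finset.Icc ((m:ℕ) - Wf (m:ℕ)) ((m:ℕ) + Wf (m:ℕ))
    · obtain ⟨m₀, hm₀⟩ := hex
      rw [tsum_eq_single m₀ ?_]
      · exact Set.indicator_le_self _ _ n
      · intro m' hm'
        refine Set.indicator_of_notMem (fun hn' => ?_) _
        have hdisj := hu_disj m'.2 m₀.2 (Subtype.coe_injective.ne hm')
        have h1 : (n:ℕ) ∈ Metric.closedBall ((m':ℕ):ℕ) ((Wf (m':ℕ)):ℝ) :=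
          Icc_subset_ball _ _ (by simpa using hn')
        have h2 : (n:ℕ) ∈ Metric.closedBall ((m₀:ℕ):ℕ) ((Wf (m₀:ℕ)):ℝ) :=
          Icc_subset_ball _ _ (by simpa using hm₀)
        exact Set.disjoint_left.mp hdisj h1 h2
    · push_neg at hex
      have : ∀ m : u, Set.indicator
          (↑(Finset.Icc ((m:ℕ) - Wf (m:ℕ)) ((m:ℕ) + Wf (m:ℕ))) : Set ℕ) big n = 0 := by
        intro m; exact Set.indicator_of_notMem (by simpa using hex m) _
      simp only [this, tsum_zero]
      exact zero_le
  -- final assembly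
  have h6 : c * ∑' m : u, ((Wf (m:ℕ) : ℕ) : ℝ≥0∞) ≤ B := by
    rw [← ENNReal.tsum_mul_left]; exact hdisj_sum
  calc Measure.count {m : ℕ | ENNReal.ofReal t < Smax b m}
      ≤ Measure.count E' := measure_mono step2
    _ ≤ ∑' m : u, (9 * Wf (m:ℕ) : ℝ≥0∞) := hcount
    _ = 9 * ∑' m : u, ((Wf (m:ℕ) : ℕ) : ℝ≥0∞) := ENNReal.tsum_mul_left
    _ ≤ 9 * (B / c) := by
        gcongr
        rw [ENNReal.le_div_iff_mul_le (Or.inl hc0) (Or.inl hcT), mul_comm]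
        exact h6
    _ = 9 * B / c := (mul_div_assoc _ _ _).symm

lemma discrete_max_sq (b : ℕ → ℝ≥0∞) :
    ∑' m, (Smax b m)^2 ≤ 288 * ∑' n, (b n)^2 := by
  by_cases hT : (∑' n, (b n)^2) = ⊤
  · rw [hT]
    rw [ENNReal.mul_top (by norm_num)]
    exact le_top
  have hbn : ∀ n, b n ≠ ⊤ := by
    intro n h
    have := ENNReal.ne_top_of_tsum_ne_top hT n
    rw [h, pow_two, ENNReal.top_mul_top] at this
    exact this rfl
  have hBfin : ∀ t : ℝ, 0 < t → (∑' n, (if ENNReal.ofReal (t/4) < b n then b n else 0)) ≠ ⊤ := by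
    intro t ht
    have hc0 : ENNReal.ofReal (t/4) ≠ 0 := by
      simp only [ne_eq, ENNReal.ofReal_eq_zero, not_le]; linarith
    have hle : ∀ n, (if ENNReal.ofReal (t/4) < b n then b n else 0)
        ≤ (b n)^2 / ENNReal.ofReal (t/4) := by
      intro n
      by_cases h : ENNReal.ofReal (t/4) < b n
      · simp only [h, if_true]
        calc b n = b n * 1 := (mul_one _).symm
          _ ≤ b n * (b n / ENNReal.ofReal (t/4)) := by
              gcongr
              rw [ENNReal.le_div_iff_mul_le (Or.inl hc0) (Or.inl ENNReal.ofReal_ne_top), one_mul]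
              exact h.le
          _ = (b n)^2 / ENNReal.ofReal (t/4) := by
              rw [← mul_div_assoc, sq]
      · simp [h]
    intro htop
    have h1 : (∑' n, (if ENNReal.ofReal (t/4) < b n then b n else 0))
        ≤ (∑' n, (b n)^2) / ENNReal.ofReal (t/4) := by
      refine le_trans (ENNReal.tsum_le_tsum hle) ?_
      simp only [div_eq_mul_inv]
      rw [ENNReal.tsum_mul_right]
    rw [htop, top_le_iff] at h1
    rw [ENNReal.div_eq_top] at h1
    rcases h1 with ⟨_, h⟩ | ⟨h, _⟩
    · exact hc0 h
    · exact hT h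
  calc ∑' m, (Smax b m)^2
      = ∑' m, ∫⁻ t in Ioi (0:ℝ), (if ENNReal.ofReal t < Smax b m then ENNReal.ofReal (2*t) else 0) :=
        tsum_congr fun m => sq_layer _
    _ = ∫⁻ t in Ioi (0:ℝ), ∑' m, (if ENNReal.ofReal t < Smax b m then ENNReal.ofReal (2*t) else 0) := by
        refine (lintegral_tsum fun m => Measurable.aemeasurable ?_).symm
        exact Measurable.ite (measurableSet_lt ENNReal.measurable_ofReal measurable_const)
          (by fun_prop) measurable_const
    _ ≤ ∫⁻ t in Ioi (0:ℝ), 72 * ∑' n, (if ENNReal.ofReal (t/4) < b n then b n else 0) := by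
        refine lintegral_mono_ae (ae_restrict_of_forall_mem measurableSet_Ioi fun t ht => ?_)
        have ht' : (0:ℝ) < t := ht
        have hsum : ∑' m, (if ENNReal.ofReal t < Smax b m then ENNReal.ofReal (2*t) else 0)
            = ENNReal.ofReal (2*t) * Measure.count {m : ℕ | ENNReal.ofReal t < Smax b m} := by
          rw [Measure.count_apply (by measurability),
            ← ENNReal.tsum_set_one, tsum_subtype {m : ℕ | ENNReal.ofReal t < Smax b m} (fun _ => (1:ℝ≥0∞)), ← ENNReal.tsum_mul_left]
          refine tsum_congr fun m => ?_
          rw [Set.indicator_apply]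
          simp only [mem_setOf_eq, mul_ite, mul_one, mul_zero]
        rw [hsum]
        have hw := weak_type b t ht' (hBfin t ht')
        calc ENNReal.ofReal (2*t) * Measure.count {m : ℕ | ENNReal.ofReal t < Smax b m}
            ≤ ENNReal.ofReal (2*t) *
              (9 * (∑' n, (if ENNReal.ofReal (t/4) < b n then b n else 0)) / ENNReal.ofReal (t/4)) := by
              gcongr
          _ = 72 * ∑' n, (if ENNReal.ofReal (t/4) < b n then b n else 0) := by
              have h8 : ENNReal.ofReal (2*t) = 8 * ENNReal.ofReal (t/4) := by
                rw [show (2*t) = 8 * (t/4) by ring, ENNReal.ofReal_mul (by norm_num)]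
                norm_num
              rw [h8, mul_div_assoc]
              rw [show (8 : ℝ≥0∞) * ENNReal.ofReal (t/4) *
                  (9 * ((∑' n, (if ENNReal.ofReal (t/4) < b n then b n else 0)) / ENNReal.ofReal (t/4)))
                  = 72 * (ENNReal.ofReal (t/4) *
                    ((∑' n, (if ENNReal.ofReal (t/4) < b n then b n else 0)) / ENNReal.ofReal (t/4))) by ring]
              rw [ENNReal.mul_div_cancel (by simp only [ne_eq, ENNReal.ofReal_eq_zero, not_le]; linarith)
                ENNReal.ofReal_ne_top]
    _ = 72 * ∑' n, ∫⁻ t in Ioi (0:ℝ), (if ENNReal.ofReal (t/4) < b n then b n else 0) := by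
        rw [lintegral_const_mul' _ _ (by norm_num : (72:ℝ≥0∞) ≠ ⊤)]
        congr 1
        refine lintegral_tsum fun n => Measurable.aemeasurable ?_
        exact Measurable.ite
          (measurableSet_lt ((measurable_id.div_const 4).ennreal_ofReal) measurable_const)
          measurable_const measurable_const
    _ = 288 * ∑' n, (b n)^2 := by
        have hint : ∀ n, ∫⁻ t in Ioi (0:ℝ), (if ENNReal.ofReal (t/4) < b n then b n else 0)
            = 4 * (b n)^2 := by
          intro n
          have hmeas : MeasurableSet {t : ℝ | ENNReal.ofReal (t/4) < b n} :=
            measurableSet_lt ((measurable_id.div_const 4).ennreal_ofReal) measurable_const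
          have hind : ∀ t : ℝ, (if ENNReal.ofReal (t/4) < b n then b n else 0)
              = Set.indicator {t : ℝ | ENNReal.ofReal (t/4) < b n} (fun _ => b n) t := by
            intro t; rw [Set.indicator_apply]; rfl
          simp only [hind]
          rw [lintegral_indicator hmeas, Measure.restrict_restrict hmeas, setLIntegral_const]
          have hset : {t : ℝ | ENNReal.ofReal (t/4) < b n} ∩ Ioi 0 = Ioo 0 (4 * (b n).toReal) := by
            ext s
            simp only [mem_inter_iff, mem_setOf_eq, mem_Ioi, mem_Ioo]
            constructor
            · rintro ⟨h, hs⟩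
              refine ⟨hs, ?_⟩
              have := (ENNReal.ofReal_lt_iff_lt_toReal (by linarith) (hbn n)).mp h
              linarith
            · rintro ⟨hs, h⟩
              exact ⟨(ENNReal.ofReal_lt_iff_lt_toReal (by linarith) (hbn n)).mpr (by linarith), hs⟩
          rw [hset, Real.volume_Ioo]
          rw [show 4 * (b n).toReal - 0 = 4 * (b n).toReal by ring,
            ENNReal.ofReal_mul (by norm_num), ENNReal.ofReal_toReal (hbn n)]
          rw [show ENNReal.ofReal (4:ℝ) = 4 by norm_num]
          rw [sq]; ring
        rw [tsum_congr hint, ENNReal.tsum_mul_left, ← mul_assoc]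
        norm_num

lemma maxLong_le_Smax (τ : Measure ℝ) (hsupp : τ (Iio 0) = 0) (m : ℕ) (k : ℝ)
    (hk : k ∈ Ioc (m:ℝ) ((m:ℝ)+1)) :
    maxLong τ k ≤ Smax (fun n => τ (Icc (n:ℝ) ((n:ℝ)+1))) m := by
  refine iSup₂_le fun L hL => ?_
  set W := ⌈L⌉₊ with hW
  have hL0 : (0:ℝ) < L := lt_of_lt_of_le one_pos hL
  have hW1 : 1 ≤ W := Nat.one_le_ceil_iff.mpr hL0
  have hLW : L ≤ (W:ℝ) := Nat.le_ceil L
  have hW2L : (W:ℝ) ≤ 2*L := by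
    have := (Nat.ceil_lt_add_one hL0.le)
    rw [← hW] at this
    linarith
  have hcover : Icc (k-L) (k+L) ⊆ Iio 0 ∪ ⋃ n ∈ Finset.Icc (m-W) (m+W), Icc (n:ℝ) ((n:ℝ)+1) := by
    intro x hx
    rcases lt_or_ge x 0 with hx0 | hx0
    · exact Or.inl hx0
    · right
      have hxle : x ≤ (m:ℝ) + 1 + L := by
        have := hx.2; have := hk.2; linarith
      have hxge : (m:ℝ) - L < x := by
        have := hx.1; have := hk.1; linarith
      set n₀ := ⌊x⌋₊ with hn₀
      have hfl : (n₀:ℝ) ≤ x := Nat.floor_le hx0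
      have hfl2 : x < (n₀:ℝ) + 1 := Nat.lt_floor_add_one x
      by_cases hbig : m + W + 1 ≤ n₀
      · -- x = m+W+1 exactly; use n = m+W
        have h1 : ((m + W + 1 : ℕ):ℝ) ≤ x := le_trans (by exact_mod_cast Nat.cast_le.mpr hbig) hfl
        have h2 : x ≤ ((m + W + 1 : ℕ):ℝ) := by push_cast; push_cast at h1; linarith
        refine mem_biUnion (show m + W ∈ Finset.Icc (m-W) (m+W) by
          simp only [Finset.mem_Icc]; omega) ?_
        constructor
        · push_cast at h1 ⊢; linarith
        · push_cast at h2 ⊢; linarith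
      · push_neg at hbig
        by_cases hsmall : n₀ < m - W
        · exfalso
          have hpos : 0 < m - W := lt_of_le_of_lt (Nat.zero_le _) hsmall
          have hWm : W ≤ m := by omega
          have hcast : ((m - W : ℕ):ℝ) = (m:ℝ) - W := by
            push_cast [Nat.cast_sub hWm]; ring
          have h1 : x < ((m - W : ℕ):ℝ) := by
            have : (n₀:ℝ) + 1 ≤ ((m - W:ℕ):ℝ) := by exact_mod_cast Nat.succ_le_of_lt hsmall
            linarith
          rw [hcast] at h1
          have : (m:ℝ) - W ≤ (m:ℝ) - L := by linarith
          linarith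
        · push_neg at hsmall
          exact mem_biUnion (show n₀ ∈ Finset.Icc (m-W) (m+W) by
            simp only [Finset.mem_Icc]; omega) ⟨hfl, hfl2.le⟩
  have hτ : τ (Icc (k-L) (k+L)) ≤ ∑ n ∈ Finset.Icc (m-W) (m+W), τ (Icc (n:ℝ) ((n:ℝ)+1)) := by
    calc τ (Icc (k-L) (k+L)) ≤ τ (Iio 0 ∪ ⋃ n ∈ Finset.Icc (m-W) (m+W), Icc (n:ℝ) ((n:ℝ)+1)) :=
          measure_mono hcover
      _ ≤ τ (Iio 0) + τ (⋃ n ∈ Finset.Icc (m-W) (m+W), Icc (n:ℝ) ((n:ℝ)+1)) := measure_union_le _ _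
      _ ≤ 0 + ∑ n ∈ Finset.Icc (m-W) (m+W), τ (Icc (n:ℝ) ((n:ℝ)+1)) := by
          rw [hsupp]; gcongr; exact measure_biUnion_finset_le _ _
      _ = _ := zero_add _
  calc τ (Icc (k-L) (k+L)) / ENNReal.ofReal (2*L)
      ≤ (∑ n ∈ Finset.Icc (m-W) (m+W), τ (Icc (n:ℝ) ((n:ℝ)+1))) / (W:ℝ≥0∞) := by
        refine ENNReal.div_le_div hτ ?_
        rw [show ((W:ℕ):ℝ≥0∞) = ENNReal.ofReal (W:ℝ) by simp [ENNReal.ofReal_natCast]]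
        exact ENNReal.ofReal_le_ofReal hW2L
    _ ≤ Smax (fun n => τ (Icc (n:ℝ) ((n:ℝ)+1))) m :=
        le_iSup₂ (f := fun (W : ℕ) (_ : 1 ≤ W) =>
          (∑ n ∈ Finset.Icc (m - W) (m + W), τ (Icc (n:ℝ) ((n:ℝ)+1))) / (W : ℝ≥0∞)) W hW1

lemma logMaxLong_le_sq (τ : Measure ℝ) (k : ℝ) (hk : 0 < k) :
    logMaxLong τ k ≤ (maxLong τ k)^2 := by
  rw [logMaxLong]
  rcases eq_or_ne (maxLong τ k) ⊤ with h | h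
  · rw [if_pos h, h]
    rw [pow_two, ENNReal.top_mul_top]
  · rw [if_neg h]
    set x := (maxLong τ k).toReal with hx
    have hx0 : 0 ≤ x := ENNReal.toReal_nonneg
    have hreal : Real.log (1 + (x / k) ^ 2) * k ^ 2 ≤ x^2 := by
      have h1 : Real.log (1 + (x/k)^2) ≤ (x/k)^2 := by
        have := Real.log_le_sub_one_of_pos (x := 1 + (x/k)^2) (by positivity)
        linarith
      calc Real.log (1 + (x / k) ^ 2) * k ^ 2 ≤ (x/k)^2 * k^2 := by
            apply mul_le_mul_of_nonneg_right h1 (by positivity)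
        _ = x^2 := by field_simp
    calc ENNReal.ofReal (Real.log (1 + (x / k) ^ 2) * k ^ 2) ≤ ENNReal.ofReal (x^2) :=
          ENNReal.ofReal_le_ofReal hreal
      _ = (ENNReal.ofReal x)^2 := (ENNReal.ofReal_pow hx0 2)
      _ = (maxLong τ k)^2 := by rw [hx, ENNReal.ofReal_toReal h]

-- (c) ⇒ (b) pointwise lower bound
lemma maxLong_lower (τ : Measure ℝ) (n : ℕ) (k : ℝ) (hk : k ∈ Icc (n:ℝ) ((n:ℝ)+1)) :
    τ (Icc (n:ℝ) ((n:ℝ)+1)) / 2 ≤ maxLong τ k := by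
  have h1 : τ (Icc (n:ℝ) ((n:ℝ)+1)) / ENNReal.ofReal (2*1) ≤ maxLong τ k := by
    refine le_trans ?_ (le_iSup₂ (f := fun (L:ℝ) (_ : 1 ≤ L) =>
      τ (Icc (k - L) (k + L)) / ENNReal.ofReal (2 * L)) 1 le_rfl)
    refine ENNReal.div_le_div (measure_mono ?_) le_rfl
    intro x hx
    constructor
    · have := hk.2; have := hx.1; linarith
    · have := hx.2; have := hk.1; linarith
  rw [show (2*1 : ℝ) = 2 by ring] at h1
  rw [show ENNReal.ofReal (2:ℝ) = 2 by norm_num] at h1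
  exact h1

lemma g_le_logMaxLong (τ : Measure ℝ)
    (n : ℕ) (k : ℝ) (hk : k ∈ Ioo (n:ℝ) ((n:ℝ)+1)) :
    ENNReal.ofReal (Real.log (1 + ((τ (Icc (n:ℝ) ((n:ℝ)+1))).toReal / (2*((n:ℝ)+1)))^2) * (n:ℝ)^2)
      ≤ logMaxLong τ k := by
  set A := (τ (Icc (n:ℝ) ((n:ℝ)+1))).toReal with hA
  have hA0 : 0 ≤ A := ENNReal.toReal_nonneg
  have hn0 : (0:ℝ) ≤ n := Nat.cast_nonneg n
  have hk0 : 0 < k := lt_of_le_of_lt hn0 hk.1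
  rw [logMaxLong]
  rcases eq_or_ne (maxLong τ k) ⊤ with h | h
  · rw [if_pos h]; exact le_top
  · rw [if_neg h]
    set x := (maxLong τ k).toReal with hx
    have hlow : τ (Icc (n:ℝ) ((n:ℝ)+1)) / 2 ≤ maxLong τ k :=
      maxLong_lower τ n k ⟨hk.1.le, hk.2.le⟩
    have hxA : A / 2 ≤ x := by
      have h2 := ENNReal.toReal_mono h hlow
      rw [ENNReal.toReal_div] at h2
      simpa using h2
    have hx0 : 0 ≤ x := le_trans (by positivity) hxA
    apply ENNReal.ofReal_le_ofReal
    have hfrac : A / (2*((n:ℝ)+1)) ≤ x / k := by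
      rw [div_le_div_iff₀ (by positivity) hk0]
      have h1 : A * k ≤ A * ((n:ℝ)+1) := by
        apply mul_le_mul_of_nonneg_left hk.2.le hA0
      have h2 : (A/2) * (2*((n:ℝ)+1)) ≤ x * (2*((n:ℝ)+1)) := by
        apply mul_le_mul_of_nonneg_right hxA (by positivity)
      calc A * k ≤ A * ((n:ℝ)+1) := h1
        _ = (A/2) * (2*((n:ℝ)+1)) := by ring
        _ ≤ x * (2*((n:ℝ)+1)) := h2
    have hlog : Real.log (1 + (A / (2*((n:ℝ)+1)))^2) ≤ Real.log (1 + (x/k)^2) := by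
      apply Real.log_le_log (by positivity)
      have : (A / (2*((n:ℝ)+1)))^2 ≤ (x/k)^2 := by
        apply pow_le_pow_left₀ (by positivity) hfrac
      linarith
    have hk2 : (n:ℝ)^2 ≤ k^2 := by
      apply pow_le_pow_left₀ hn0 hk.1.le
    apply mul_le_mul hlog hk2 (by positivity)
    exact Real.log_nonneg (by nlinarith)

/-- Let `τ` be a locally finite positive Borel measure on `ℝ` supported in
`[0,∞)`.  Then the following are equivalent:
(a) `M_lτ ∈ L²((0,∞), dk)`;
(b) `Σₙ τ([n,n+1])² < ∞`;
(c) `∫₀^∞ log[1 + (M_lτ(k)/k)²] k² dk < ∞`. -/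
theorem stmt_3 (τ : Measure ℝ) [IsLocallyFiniteMeasure τ] (hsupp : τ (Iio 0) = 0) :
    List.TFAE
      [(∫⁻ k in Ioi (0 : ℝ), (maxLong τ k) ^ 2) < ⊤,
       (∑' n : ℕ, (τ (Icc (n : ℝ) ((n : ℝ) + 1))) ^ 2) < ⊤,
       (∫⁻ k in Ioi (0 : ℝ), logMaxLong τ k) < ⊤] := by
  set a : ℕ → ℝ≥0∞ := fun n => τ (Icc (n:ℝ) ((n:ℝ)+1)) with ha
  have haf : ∀ n, a n ≠ ⊤ := fun n => (isCompact_Icc.measure_lt_top).ne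
  tfae_have 1 → 3 := by
    intro h1
    refine lt_of_le_of_lt ?_ h1
    exact lintegral_mono_ae (ae_restrict_of_forall_mem measurableSet_Ioi
      fun k hk => logMaxLong_le_sq τ k hk)
  tfae_have 2 → 1 := by
    intro hb
    have hdisj : Pairwise (Function.onFun Disjoint fun m:ℕ => Ioc (m:ℝ) ((m:ℝ)+1)) := by
      intro i j hij
      simp only [Function.onFun]
      refine Set.disjoint_left.mpr fun x hxi hxj => hij ?_
      have h1 : (i:ℝ) < (j:ℝ)+1 := lt_of_lt_of_le hxi.1 hxj.2
      have h2 : (j:ℝ) < (i:ℝ)+1 := lt_of_lt_of_le hxj.1 hxi.2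
      have h1' : i < j+1 := by exact_mod_cast h1
      have h2' : j < i+1 := by exact_mod_cast h2
      omega
    have hdecomp : Ioi (0:ℝ) = ⋃ m:ℕ, Ioc (m:ℝ) ((m:ℝ)+1) := by
      ext k
      simp only [mem_Ioi, mem_iUnion, mem_Ioc]
      constructor
      · intro hk
        refine ⟨⌈k⌉₊ - 1, ?_, ?_⟩
        · have h1 : 1 ≤ ⌈k⌉₊ := Nat.one_le_ceil_iff.mpr hk
          have h2 : (⌈k⌉₊:ℝ) < k + 1 := Nat.ceil_lt_add_one hk.le
          have h3 : ((⌈k⌉₊ - 1 : ℕ):ℝ) = (⌈k⌉₊:ℝ) - 1 := by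
            push_cast [Nat.cast_sub h1]; ring
          rw [h3]; linarith
        · have h1 : 1 ≤ ⌈k⌉₊ := Nat.one_le_ceil_iff.mpr hk
          have h2 : k ≤ (⌈k⌉₊:ℝ) := Nat.le_ceil k
          have h3 : ((⌈k⌉₊ - 1 : ℕ):ℝ) = (⌈k⌉₊:ℝ) - 1 := by
            push_cast [Nat.cast_sub h1]; ring
          rw [h3]; linarith
      · rintro ⟨m, h1, _⟩
        exact lt_of_le_of_lt (Nat.cast_nonneg m) h1
    calc ∫⁻ k in Ioi (0:ℝ), (maxLong τ k)^2
        = ∑' m : ℕ, ∫⁻ k in Ioc (m:ℝ) ((m:ℝ)+1), (maxLong τ k)^2 := by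
          rw [hdecomp, Measure.restrict_iUnion hdisj (fun _ => measurableSet_Ioc),
            lintegral_sum_measure]
      _ ≤ ∑' m : ℕ, (Smax a m)^2 := by
          refine ENNReal.tsum_le_tsum fun m => ?_
          calc ∫⁻ k in Ioc (m:ℝ) ((m:ℝ)+1), (maxLong τ k)^2
              ≤ ∫⁻ _ in Ioc (m:ℝ) ((m:ℝ)+1), (Smax a m)^2 := by
                refine lintegral_mono_ae (ae_restrict_of_forall_mem measurableSet_Ioc
                  fun k hk => ?_)
                gcongr
                exact maxLong_le_Smax τ hsupp m k hk
            _ = (Smax a m)^2 * volume (Ioc (m:ℝ) ((m:ℝ)+1)) := setLIntegral_const _ _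
            _ = (Smax a m)^2 := by
                rw [Real.volume_Ioc, show (m:ℝ)+1-(m:ℝ) = 1 by ring]
                simp
      _ ≤ 288 * ∑' n, (a n)^2 := discrete_max_sq a
      _ < ⊤ := ENNReal.mul_lt_top (by norm_num) hb
  tfae_have 3 → 2 := by
    intro hc
    set g : ℕ → ℝ≥0∞ := fun n =>
      ENNReal.ofReal (Real.log (1 + ((a n).toReal/(2*((n:ℝ)+1)))^2) * (n:ℝ)^2) with hg
    have hg_sum : ∑' n, g n ≤ ∫⁻ k in Ioi (0:ℝ), logMaxLong τ k := by
      have hdisj : Pairwise (Function.onFun Disjoint fun n:ℕ => Ioo (n:ℝ) ((n:ℝ)+1)) := by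
        intro i j hij
        simp only [Function.onFun]
        refine Set.disjoint_left.mpr fun x hxi hxj => hij ?_
        have h1 : (i:ℝ) < (j:ℝ)+1 := lt_of_lt_of_le hxi.1 hxj.2.le
        have h2 : (j:ℝ) < (i:ℝ)+1 := lt_of_lt_of_le hxj.1 hxi.2.le
        have h1' : i < j+1 := by exact_mod_cast h1
        have h2' : j < i+1 := by exact_mod_cast h2
        omega
      have hsub : (⋃ n : ℕ, Ioo (n:ℝ) ((n:ℝ)+1)) ⊆ Ioi 0 := by
        rintro x hx
        simp only [mem_iUnion, mem_Ioo] at hx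
        obtain ⟨n, h1, _⟩ := hx
        exact lt_of_le_of_lt (Nat.cast_nonneg n) h1
      calc ∑' n, g n = ∑' n : ℕ, g n * volume (Ioo (n:ℝ) ((n:ℝ)+1)) := by
            refine tsum_congr fun n => ?_
            rw [Real.volume_Ioo, show (n:ℝ)+1-(n:ℝ) = 1 by ring]
            simp
        _ = ∑' n : ℕ, ∫⁻ _ in Ioo (n:ℝ) ((n:ℝ)+1), g n := by
            refine tsum_congr fun n => (setLIntegral_const _ _).symm
        _ ≤ ∑' n : ℕ, ∫⁻ k in Ioo (n:ℝ) ((n:ℝ)+1), logMaxLong τ k := by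
            refine ENNReal.tsum_le_tsum fun n => ?_
            exact lintegral_mono_ae (ae_restrict_of_forall_mem measurableSet_Ioo
              fun k hk => g_le_logMaxLong τ n k hk)
        _ = ∫⁻ k in ⋃ n : ℕ, Ioo (n:ℝ) ((n:ℝ)+1), logMaxLong τ k := by
            rw [Measure.restrict_iUnion hdisj (fun _ => measurableSet_Ioo),
              lintegral_sum_measure]
        _ ≤ ∫⁻ k in Ioi (0:ℝ), logMaxLong τ k :=
            lintegral_mono' (Measure.restrict_mono hsub le_rfl) le_rfl
    have hgfin : ∑' n, g n ≠ ⊤ := (lt_of_le_of_lt hg_sum hc).ne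
    have htend := ENNReal.tendsto_atTop_zero_of_tsum_ne_top hgfin
    have hlog2 : (0:ℝ≥0∞) < ENNReal.ofReal (Real.log 2) := by
      rw [ENNReal.ofReal_pos]
      exact Real.log_pos (by norm_num)
    have hev : ∀ᶠ n in Filter.atTop, g n < ENNReal.ofReal (Real.log 2) :=
      htend.eventually_lt_const hlog2
    obtain ⟨N, hN⟩ := Filter.eventually_atTop.mp hev
    have key : ∀ n : ℕ, 1 ≤ n → g n < ENNReal.ofReal (Real.log 2) → (a n)^2 ≤ 32 * g n := by
      intro n hn1 hgn
      set A := (a n).toReal with hA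
      have hA0 : 0 ≤ A := ENNReal.toReal_nonneg
      have hn1R : (1:ℝ) ≤ n := by exact_mod_cast hn1
      set u := (A/(2*((n:ℝ)+1)))^2 with hu
      have hu0 : 0 ≤ u := sq_nonneg _
      by_cases hcase : A ≤ 2*((n:ℝ)+1)
      · -- small case
        have hu1 : u ≤ 1 := by
          rw [hu]
          have h1 : A/(2*((n:ℝ)+1)) ≤ 1 := by
            rw [div_le_one (by positivity)]; exact hcase
          nlinarith [div_nonneg hA0 (by positivity : (0:ℝ) ≤ 2*((n:ℝ)+1))]
        have hlogl : u/2 ≤ Real.log (1+u) := by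
          have h1 := Real.log_le_sub_one_of_pos (x := (1+u)⁻¹) (by positivity)
          rw [Real.log_inv] at h1
          have h2 : 1 - (1+u)⁻¹ ≤ Real.log (1+u) := by linarith
          have hpos : (0:ℝ) < 1+u := by linarith
          have h3 : (1+u)⁻¹ ≤ 1 - u/2 := by
            rw [← one_div, div_le_iff₀ hpos]
            nlinarith
          linarith
        have hreal : A^2 ≤ 32 * (Real.log (1+u) * (n:ℝ)^2) := by
          have h16 : A^2 ≤ 16 * (u * (n:ℝ)^2) := by
            have h5 : u * (2*((n:ℝ)+1))^2 = A^2 := by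
              rw [hu, div_pow]; field_simp
            have h6 : (2*((n:ℝ)+1))^2 ≤ 16*(n:ℝ)^2 := by nlinarith
            nlinarith [mul_le_mul_of_nonneg_left h6 hu0, h5]
          calc A^2 ≤ 16 * (u * (n:ℝ)^2) := h16
            _ = 32 * ((u/2) * (n:ℝ)^2) := by ring
            _ ≤ 32 * (Real.log (1+u) * (n:ℝ)^2) := by
                have := mul_le_mul_of_nonneg_right hlogl (sq_nonneg (n:ℝ))
                linarith
        calc (a n)^2 = ENNReal.ofReal (A^2) := by
              rw [hA, ENNReal.ofReal_pow ENNReal.toReal_nonneg,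
                ENNReal.ofReal_toReal (haf n)]
          _ ≤ ENNReal.ofReal (32 * (Real.log (1+u) * (n:ℝ)^2)) :=
              ENNReal.ofReal_le_ofReal hreal
          _ = 32 * g n := by
              rw [ENNReal.ofReal_mul (by norm_num)]
              rw [show ENNReal.ofReal (32:ℝ) = 32 by norm_num]
          -- g n = ofReal (log(1+u) * n^2) definitionally
      · -- big case: contradiction with hgn
        exfalso
        push_neg at hcase
        have hu1 : 1 ≤ u := by
          rw [hu]
          have h1 : 1 ≤ A/(2*((n:ℝ)+1)) := by
            rw [le_div_iff₀ (by positivity)]; linarith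
          nlinarith
        have h1 : Real.log 2 ≤ Real.log (1+u) := by
          apply Real.log_le_log (by norm_num)
          linarith
        have h2 : Real.log 2 * 1 ≤ Real.log (1+u) * (n:ℝ)^2 := by
          have hlog20 : 0 ≤ Real.log 2 := Real.log_nonneg (by norm_num)
          have hn2 : (1:ℝ) ≤ (n:ℝ)^2 := by nlinarith
          nlinarith
        have h3 : ENNReal.ofReal (Real.log 2) ≤ g n := by
          rw [hg]
          exact ENNReal.ofReal_le_ofReal (by linarith)
        exact absurd hgn (not_lt.mpr h3)
    have hbound : ∀ n : ℕ, (a n)^2 ≤ (if n < N+1 then (a n)^2 else 0) + 32 * g n := by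
      intro n
      by_cases h : n < N+1
      · simp only [h, if_true]; exact le_add_right le_rfl
      · simp only [h, if_false, zero_add]
        push_neg at h
        exact key n (by omega) (hN n (by omega))
    calc ∑' n, (a n)^2 ≤ ∑' n : ℕ, ((if n < N+1 then (a n)^2 else 0) + 32 * g n) :=
          ENNReal.tsum_le_tsum hbound
      _ = (∑' n : ℕ, (if n < N+1 then (a n)^2 else 0)) + 32 * ∑' n, g n := by
          rw [ENNReal.tsum_add, ENNReal.tsum_mul_left]
      _ < ⊤ := by
          refine ENNReal.add_lt_top.mpr ⟨?_, ?_⟩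
          · rw [tsum_eq_sum (s := Finset.range (N+1))
              (fun n hn => if_neg (by simpa [Finset.mem_range] using hn))]
            refine ENNReal.sum_lt_top.mpr fun n _ => ?_
            split
            · exact ENNReal.pow_lt_top (lt_top_iff_ne_top.mpr (haf n))
            · exact lt_top_iff_ne_top.mpr ENNReal.zero_ne_top
          · exact ENNReal.mul_lt_top (by norm_num) (lt_top_iff_ne_top.mpr hgfin)
  tfae_finish
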